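/- Suppose in a directed rectilinear network every ordered pair among three given terminals t_i ∈ Q₁(t_j), t_j, t_k ∈ Q₃(t_j) is connected by a directed Manhattan path, and suppose there also exists a terminal t_l in the open fourth quadrant Q₄(t_j). If the directed boundaries of the strips R(t_i,t_j) and R(t_j,t_k) are oriented so that both edges of the network incident to t_j lying in Q₄(t_j) are directed away from t_j, then the network contains no directed Manhattan path from t_l to t_j — a contradiction. Hence two strips sharing the terminal t_j with t_i ∈ Q₁(t_j), t_k ∈ Q₃(t_j) must be compatibly oriented whenever Q₄(t_j) (or symmetrically Q₂(t_j)) contains a terminal. -/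
import Mathlib


open MeasureTheory

noncomputable section

/-- l1 (Manhattan) distance in the plane. -/
def d1 (p q : ℝ × ℝ) : ℝ := |p.1 - q.1| + |p.2 - q.2|

/-- Smallest axis-parallel rectangle containing `a` and `b`. -/
def Rect (a b : ℝ × ℝ) : Set (ℝ × ℝ) :=
  {m | min a.1 b.1 ≤ m.1 ∧ m.1 ≤ max a.1 b.1 ∧ min a.2 b.2 ≤ m.2 ∧ m.2 ≤ max a.2 b.2}

/-- Length of a polygonal path given by its list of vertices. -/
def pathLen : List (ℝ × ℝ) → ℝ
  | [] => 0
  | [_] => 0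
  | p :: q :: rest => d1 p q + pathLen (q :: rest)

/-- `P` is a path starting at `a` and ending at `b`. -/
def IsPathFrom (P : List (ℝ × ℝ)) (a b : ℝ × ℝ) : Prop :=
  P.head? = some a ∧ P.getLast? = some b

/-- The set of points of the polygonal path `P`. -/
def polyline (P : List (ℝ × ℝ)) : Set (ℝ × ℝ) :=
  ⋃ pr ∈ P.zip P.tail, segment ℝ pr.1 pr.2

/-- There is a directed Manhattan path from `a` to `b` using the directed edges of `N`. -/
def DirManPath (N : Set ((ℝ × ℝ) × (ℝ × ℝ))) (a b : ℝ × ℝ) : Prop :=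
  ∃ P : List (ℝ × ℝ), IsPathFrom P a b ∧ P.Chain' (fun u v => (u, v) ∈ N) ∧
    pathLen P = d1 a b

lemma d1_triangle (a b c : ℝ × ℝ) : d1 a c ≤ d1 a b + d1 b c := by
  unfold d1
  have h1 : |a.1 - c.1| ≤ |a.1 - b.1| + |b.1 - c.1| := abs_sub_le _ _ _
  have h2 : |a.2 - c.2| ≤ |a.2 - b.2| + |b.2 - c.2| := abs_sub_le _ _ _
  linarith

lemma key {R : (ℝ × ℝ) → (ℝ × ℝ) → Prop} :
    ∀ (rest : List (ℝ × ℝ)) (a q b : ℝ × ℝ),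
      (a :: q :: rest).getLast? = some b → (a :: q :: rest).Chain' R →
      ∃ u, R u b ∧ d1 a u + d1 u b ≤ pathLen (a :: q :: rest) := by
  intro rest
  induction rest with
  | nil =>
    intro a q b hlast hchain
    simp [List.getLast?] at hlast
    subst hlast
    refine ⟨a, hchain.rel_head, ?_⟩
    simp [pathLen, d1]
  | cons r rest' ih =>
    intro a q b hlast hchain
    obtain ⟨u, hu, hle⟩ := ih q r b (by simpa [List.getLast?] using hlast) hchain.tail
    refine ⟨u, hu, ?_⟩
    have htri : d1 a u ≤ d1 a q + d1 q u := d1_triangle a q u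
    show d1 a u + d1 u b ≤ d1 a q + pathLen (q :: r :: rest')
    linarith

/-- If both edges of the network incident to `tj` inside `Q₄(tj)` are directed away from
`tj` (i.e. no edge of `N` inside `Q₄(tj)` points toward `tj`) while a terminal `tl` lies in
the open fourth quadrant of `tj` and is joined to `tj` by a directed Manhattan path, we get
a contradiction. -/
theorem stmt7 (T : Set (ℝ × ℝ)) (N : Set ((ℝ × ℝ) × (ℝ × ℝ)))
    (hedge : ∀ e ∈ N, e.1 ≠ e.2 ∧ (e.1.1 = e.2.1 ∨ e.1.2 = e.2.2))
    (ti tj tk tl : ℝ × ℝ)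
    (hiT : ti ∈ T) (hjT : tj ∈ T) (hkT : tk ∈ T) (hlT : tl ∈ T)
    (hQ1 : tj.1 ≤ ti.1 ∧ tj.2 ≤ ti.2) (hQ3 : tk.1 ≤ tj.1 ∧ tk.2 ≤ tj.2)
    (hQ4 : tj.1 < tl.1 ∧ tl.2 < tj.2)
    (hij : DirManPath N ti tj) (hji : DirManPath N tj ti)
    (hjk : DirManPath N tj tk) (hkj : DirManPath N tk tj)
    (hlj : DirManPath N tl tj)
    (haway : ∀ u : ℝ × ℝ, (u, tj) ∈ N → ¬(tj.1 ≤ u.1 ∧ u.2 ≤ tj.2 ∧ u ≠ tj)) :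
    False := by
  obtain ⟨P, ⟨hhead, hlast⟩, hchain, hlen⟩ := hlj
  have hne : tl ≠ tj := fun h => absurd (congrArg Prod.fst h) (by exact ne_of_gt hQ4.1)
  cases P with
  | nil => simp at hhead
  | cons p tail =>
    simp at hhead
    subst hhead
    cases tail with
    | nil =>
      simp [List.getLast?] at hlast
      exact hne hlast
    | cons q rest =>
    obtain ⟨u, huN, hle⟩ := key rest p q tj hlast hchain
    rw [hlen] at hle
    have hune : u ≠ tj := (hedge (u, tj) huN).1
    apply haway u huN
    refine ⟨?_, ?_, hune⟩
    · by_contra h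
      push_neg at h
      have h1 : |p.1 - u.1| = p.1 - u.1 := abs_of_pos (by linarith [hQ4.1])
      have h2 : |u.1 - tj.1| = tj.1 - u.1 := (abs_of_neg (by linarith)).trans (by ring)
      have h3 : |p.1 - tj.1| = p.1 - tj.1 := abs_of_pos (by linarith [hQ4.1])
      have h4 : |p.2 - tj.2| ≤ |p.2 - u.2| + |u.2 - tj.2| := abs_sub_le _ _ _
      unfold d1 at hle
      linarith
    · by_contra h
      push_neg at h
      have h1 : |p.2 - u.2| = u.2 - p.2 := (abs_of_neg (by linarith [hQ4.2])).trans (by ring)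
      have h2 : |u.2 - tj.2| = u.2 - tj.2 := abs_of_pos (by linarith)
      have h3 : |p.2 - tj.2| = tj.2 - p.2 := (abs_of_neg (by linarith [hQ4.2])).trans (by ring)
      have h4 : |p.1 - tj.1| ≤ |p.1 - u.1| + |u.1 - tj.1| := abs_sub_le _ _ _
      unfold d1 at hle
      linarith
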